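/- Under the hypotheses of the previous setting (S, S₁ vertex-cuts of sizes k and k-1, F and F₁ semifragments with G⟨S⟩ - V(F) and G⟨S⟩ - V(F̄) both k-connected): if |S(F,F₁)| ≥ k, then |S₁ ∩ V(F)| ≥ |S ∩ V(F̄₁)|, |S ∩ V(F₁)| > |S₁ ∩ V(F̄)|, and F̄ ∩ F̄₁ = ∅. -/
import Mathlib


open SimpleGraph Set

/-- `KConn G k` means the vertex connectivity of `G` is at least `k`:
removing any set of fewer than `k` vertices leaves at least two vertices
and a connected graph. -/
def KConn {V : Type*} (G : SimpleGraph V) (k : ℕ) : Prop :=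
  ∀ S : Set V, S.ncard < k → 2 ≤ Sᶜ.ncard ∧ (G.induce Sᶜ).Connected

/-- `addClique G S` is `G⟨S⟩`: the graph `G` with all edges among `S` added. -/
def addClique {V : Type*} (G : SimpleGraph V) (S : Set V) : SimpleGraph V :=
  G ⊔ SimpleGraph.fromRel (fun u v => u ∈ S ∧ v ∈ S)

/-- `IsSemifragment G S F`: `F` is a union of at least one but not all
connected components of `G - S`, i.e. `F` is a nonempty subset of `Sᶜ`,
its complement in `Sᶜ` is nonempty, and there are no edges from `F` to
the rest of `G - S`. -/
def IsSemifragment {V : Type*} (G : SimpleGraph V) (S F : Set V) : Prop :=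
  F.Nonempty ∧ (Sᶜ \ F).Nonempty ∧ F ⊆ Sᶜ ∧
    ∀ u ∈ F, ∀ w ∈ Sᶜ \ F, ¬ G.Adj u w

/-- `(G, C) ∈ 𝒦ᵇ_k(t)`: `G` is `k`-connected, `C` is a clique of order `k`,
`G - V(C)` is bipartite with every one of its vertices having degree (in `G`)
at least `k + t`, and adjacent vertices outside `C` have no common neighbor. -/
def KClassB {V : Type*} (G : SimpleGraph V) (C : Set V) (k t : ℕ) : Prop :=
  KConn G k ∧ C.ncard = k ∧ (∀ u ∈ C, ∀ v ∈ C, u ≠ v → G.Adj u v) ∧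
    (G.induce Cᶜ).Colorable 2 ∧ (∀ v ∈ Cᶜ, k + t ≤ (G.neighborSet v).ncard) ∧
    ∀ u ∈ Cᶜ, ∀ v ∈ Cᶜ, G.Adj u v → ∀ w, ¬(G.Adj u w ∧ G.Adj v w)

/-- A graph with a nontrivial partition with no edges across is not connected. -/
lemma aux_not_connected_of_partition {W : Type*} (H : SimpleGraph W) (A : Set W)
    (hA : A.Nonempty) (hA' : Aᶜ.Nonempty)
    (hedge : ∀ u ∈ A, ∀ v, v ∉ A → ¬ H.Adj u v) : ¬ H.Connected := by
  intro hc
  obtain ⟨u, hu⟩ := hA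
  obtain ⟨v, hv⟩ := hA'
  obtain ⟨w⟩ := hc.preconnected u v
  have key : ∀ {x y : W} (_ : H.Walk x y), x ∈ A → y ∈ A := by
    intro x y p
    induction p with
    | nil => exact id
    | cons h p ih =>
      intro hx
      refine ih ?_
      by_contra hb
      exact hedge _ hx _ hb h
  exact hv (key w hu)

/-- Splitting the cardinality of a set along a partition of the ambient space. -/
lemma aux_split3 {V : Type*} [Fintype V] (X A B : Set V) (hAB : Disjoint A B) :
    X.ncard = (X ∩ A).ncard + (X ∩ B).ncard + (X ∩ (A ∪ B)ᶜ).ncard := by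
  have h1 : X = (X ∩ A) ∪ (X ∩ B) ∪ (X ∩ (A ∪ B)ᶜ) := by
    rw [← inter_union_distrib_left, ← inter_union_distrib_left, union_compl_self, inter_univ]
  have d1 : Disjoint (X ∩ A) (X ∩ B) := hAB.mono inter_subset_right inter_subset_right
  have d2 : Disjoint ((X ∩ A) ∪ (X ∩ B)) (X ∩ (A ∪ B)ᶜ) := by
    rw [Set.disjoint_left]
    rintro a (⟨-, ha⟩ | ⟨-, ha⟩) ⟨-, hc⟩
    · exact hc (Or.inl ha)
    · exact hc (Or.inr ha)
  conv_lhs => rw [h1]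
  rw [Set.ncard_union_eq d2 ((Set.toFinite _).union (Set.toFinite _)) (Set.toFinite _),
    Set.ncard_union_eq d1 (Set.toFinite _) (Set.toFinite _)]

/-- Lemma 2.2(b): with S, S₁ vertex-cuts of sizes k and k-1, F, F₁
semifragments, and G⟨S⟩ - V(F), G⟨S⟩ - V(F̄) both k-connected: if
|S(F,F₁)| ≥ k then |S₁ ∩ F| ≥ |S ∩ F̄₁|, |S ∩ F₁| > |S₁ ∩ F̄| and
F̄ ∩ F̄₁ = ∅. -/
theorem stmt9 {V : Type*} [Fintype V] (G : SimpleGraph V) (k : ℕ) (hk : 1 ≤ k)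
    (S S₁ F F₁ : Set V) (hS : S.ncard = k) (hS₁ : S₁.ncard = k - 1)
    (hScut : ¬ (G.induce Sᶜ).Connected) (hS₁cut : ¬ (G.induce S₁ᶜ).Connected)
    (hF : IsSemifragment G S F) (hF₁ : IsSemifragment G S₁ F₁)
    (h1 : KConn ((addClique G S).induce Fᶜ) k)
    (h2 : KConn ((addClique G S).induce (S ∪ F)) k)
    (hbig : k ≤ ((S₁ ∩ F) ∪ (S₁ ∩ S) ∪ (S ∩ F₁)).ncard) :
    (S ∩ (S₁ ∪ F₁)ᶜ).ncard ≤ (S₁ ∩ F).ncard ∧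
      (S₁ ∩ (S ∪ F)ᶜ).ncard < (S ∩ F₁).ncard ∧
      (S ∪ F)ᶜ ∩ (S₁ ∪ F₁)ᶜ = ∅ := by
  obtain ⟨-, -, hFS, hFedge⟩ := hF
  obtain ⟨-, -, hF₁S₁, hF₁edge⟩ := hF₁
  have dSF : Disjoint S F := Set.disjoint_left.mpr (fun _ ha haF => hFS haF ha)
  have dS₁F₁ : Disjoint S₁ F₁ := Set.disjoint_left.mpr (fun _ ha haF => hF₁S₁ haF ha)
  -- partition of S along S₁, F₁, (S₁ ∪ F₁)ᶜ
  have eqS : S.ncard = (S ∩ S₁).ncard + (S ∩ F₁).ncard + (S ∩ (S₁ ∪ F₁)ᶜ).ncard :=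
    aux_split3 S S₁ F₁ dS₁F₁
  have eqS₁ : S₁.ncard = (S₁ ∩ S).ncard + (S₁ ∩ F).ncard + (S₁ ∩ (S ∪ F)ᶜ).ncard :=
    aux_split3 S₁ S F dSF
  have hSS₁ : (S₁ ∩ S).ncard = (S ∩ S₁).ncard := by rw [inter_comm]
  -- the big union has cardinality the sum
  have equnion : ((S₁ ∩ F) ∪ (S₁ ∩ S) ∪ (S ∩ F₁)).ncard =
      (S₁ ∩ F).ncard + (S₁ ∩ S).ncard + (S ∩ F₁).ncard := by
    have d1 : Disjoint (S₁ ∩ F) (S₁ ∩ S) := by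
      rw [Set.disjoint_left]
      rintro a ⟨-, haF⟩ ⟨-, haS⟩
      exact hFS haF haS
    have d2 : Disjoint ((S₁ ∩ F) ∪ (S₁ ∩ S)) (S ∩ F₁) := by
      rw [Set.disjoint_left]
      rintro a (⟨ha, -⟩ | ⟨ha, -⟩) ⟨-, haF₁⟩ <;> exact hF₁S₁ haF₁ ha
    rw [Set.ncard_union_eq d2 ((Set.toFinite _).union (Set.toFinite _)) (Set.toFinite _),
      Set.ncard_union_eq d1 (Set.toFinite _) (Set.toFinite _)]
  rw [equnion] at hbig
  rw [hS] at eqS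
  rw [hS₁, hSS₁] at eqS₁
  refine ⟨by omega, by omega, ?_⟩
  -- third part : F̄ ∩ F̄₁ = ∅
  by_contra hne
  obtain ⟨x, hxF, hxF₁⟩ := Set.nonempty_iff_ne_empty.mpr hne
  -- element of S ∩ F₁
  have hapos : 1 ≤ (S ∩ F₁).ncard := by omega
  obtain ⟨y, hyS, hyF₁⟩ := Set.nonempty_of_ncard_ne_zero (show (S ∩ F₁).ncard ≠ 0 by omega)
  -- the separator
  set T' : Set V := (S ∩ S₁) ∪ (S ∩ (S₁ ∪ F₁)ᶜ) ∪ (S₁ ∩ (S ∪ F)ᶜ) with hT'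
  have hT'card : T'.ncard ≤ k - 1 := by
    calc T'.ncard ≤ ((S ∩ S₁) ∪ (S ∩ (S₁ ∪ F₁)ᶜ)).ncard + (S₁ ∩ (S ∪ F)ᶜ).ncard :=
          Set.ncard_union_le _ _
      _ ≤ (S ∩ S₁).ncard + (S ∩ (S₁ ∪ F₁)ᶜ).ncard + (S₁ ∩ (S ∪ F)ᶜ).ncard := by
          have := Set.ncard_union_le (S ∩ S₁) (S ∩ (S₁ ∪ F₁)ᶜ)
          omega
      _ ≤ k - 1 := by omega
  set T : Set ↥Fᶜ := Subtype.val ⁻¹' T' with hT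
  have hTcard : T.ncard < k := by
    have : T.ncard = (Subtype.val '' T).ncard :=
      (Set.ncard_image_of_injective T Subtype.val_injective).symm
    have hsub : Subtype.val '' T ⊆ T' := by
      rintro z ⟨w, hw, rfl⟩; exact hw
    have := Set.ncard_le_ncard hsub (Set.toFinite _)
    omega
  obtain ⟨-, hconn⟩ := h1 T hTcard
  -- x lies in Fᶜ and outside T'
  have hxS : x ∉ S := fun h => hxF (subset_union_left h)
  have hxnF : x ∉ F := fun h => hxF (subset_union_right h)
  have hxS₁ : x ∉ S₁ := fun h => hxF₁ (subset_union_left h)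
  have hxnF₁ : x ∉ F₁ := fun h => hxF₁ (subset_union_right h)
  have hxT' : x ∉ T' := by
    rintro ((⟨h, -⟩ | ⟨h, -⟩) | ⟨h, -⟩) <;> [exact hxS h; exact hxS h; exact hxS₁ h]
  -- y lies in Fᶜ and outside T'
  have hynF : y ∉ F := fun h => hFS h hyS
  have hyS₁ : y ∉ S₁ := fun h => (hF₁S₁ hyF₁) h
  have hyT' : y ∉ T' := by
    rintro ((⟨-, h⟩ | ⟨-, h⟩) | ⟨h, -⟩)
    · exact hyS₁ h
    · exact h (subset_union_right hyF₁)
    · exact hyS₁ h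
  -- set up the disconnection
  set A : Set ↥(Tᶜ) := {z | ((z : ↥Fᶜ) : V) ∈ (S ∪ F)ᶜ ∩ (S₁ ∪ F₁)ᶜ} with hA
  have hAne : A.Nonempty := ⟨⟨⟨x, hxnF⟩, hxT'⟩, ⟨hxF, hxF₁⟩⟩
  have hAcne : Aᶜ.Nonempty := by
    refine ⟨⟨⟨y, hynF⟩, hyT'⟩, ?_⟩
    rintro ⟨hy1, -⟩
    exact hy1 (subset_union_left hyS)
  have hedge : ∀ u ∈ A, ∀ v, v ∉ A →
      ¬ (((addClique G S).induce Fᶜ).induce Tᶜ).Adj u v := by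
    intro u hu v hv hadj
    set uu : V := ((u : ↥Fᶜ) : V)
    set vv : V := ((v : ↥Fᶜ) : V)
    have huF : uu ∈ (S ∪ F)ᶜ := hu.1
    have huF₁ : uu ∈ (S₁ ∪ F₁)ᶜ := hu.2
    have huS : uu ∉ S := fun h => huF (subset_union_left h)
    have huS₁ : uu ∉ S₁ := fun h => huF₁ (subset_union_left h)
    have hunF₁ : uu ∉ F₁ := fun h => huF₁ (subset_union_right h)
    have hvnF : vv ∉ F := (v : ↥Fᶜ).2
    have hvT' : vv ∉ T' := v.2
    -- show vv ∈ F₁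
    have hvF₁ : vv ∈ F₁ := by
      by_cases hvS : vv ∈ S
      · have hvS₁ : vv ∉ S₁ := fun h => hvT' (Or.inl (Or.inl ⟨hvS, h⟩))
        have : vv ∉ (S₁ ∪ F₁)ᶜ := fun h => hvT' (Or.inl (Or.inr ⟨hvS, h⟩))
        rcases not_not.mp (fun h => this (fun hm => h hm)) with h | h
        · exact absurd h hvS₁
        · exact h
      · have hvFb : vv ∈ (S ∪ F)ᶜ := by
          intro hm; rcases hm with h | h; exact hvS h; exact hvnF h
        have hvS₁ : vv ∉ S₁ := fun h => hvT' (Or.inr ⟨h, hvFb⟩)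
        have : ¬ vv ∈ (S₁ ∪ F₁)ᶜ := fun h => hv ⟨hvFb, h⟩
        rcases not_not.mp (fun h => this (fun hm => h hm)) with h | h
        · exact absurd h hvS₁
        · exact h
    -- adjacency passes down to addClique
    have hadj' : (addClique G S).Adj uu vv := hadj
    rcases hadj' with hG | hR
    · exact hF₁edge vv hvF₁ uu ⟨huS₁, hunF₁⟩ hG.symm
    · rcases hR.2 with ⟨h, -⟩ | ⟨-, h⟩ <;> exact huS h
  exact aux_not_connected_of_partition _ A hAne hAcne hedge hconn
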